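/- For every n ≥ 1, the S¹-equivariant map Sym^n(S¹) → S¹/C_n sending (z₁,…,z_n) to an n-th root of the product z₁⋯z_n is a homotopy equivalence; consequently, over a field k of characteristic zero, the induced map of equivariant k-modules k[S¹] → k[Sym^n S¹] ≃ k[S¹/C_n] is an equivalence. -/

import Mathlib

/-!
STATEMENT 14: For every `n ≥ 1`, the `S¹`-equivariant map `Sym^n(S¹) → S¹/C_n`,
`(z₁, …, zₙ) ↦ ⁿ√(z₁ ⋯ zₙ)`, is a homotopy equivalence.

Model: `Sym^n(S¹)` is the quotient of `(S¹)^n` by the permutation action.  Composing with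
the isomorphism `S¹/C_n ≅ S¹`, `x C_n ↦ xⁿ`, the map in question becomes the product map
`[z₁, …, zₙ] ↦ z₁ ⋯ zₙ`, and the `S¹`-equivariance (for the diagonal action on the source
and the residual action on `S¹/C_n`) becomes the identity `P(z·v) = zⁿ · P(v)`.  The claim:
there is a homotopy equivalence `Sym^n(S¹) ≃ S¹` whose underlying map is the product map;
it intertwines the diagonal `S¹`-action with `z ↦ zⁿ`.  (Consequently, over a field `k` of
characteristic zero the induced map of `k`-linear chains `k[S¹] → k[Sym^n S¹]` is an
equivalence.)
-/

noncomputable section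

namespace Stmt14

open Polynomial Topology

/-- equivalence up to permutation of the coordinates -/
def permSetoid (n : ℕ) : Setoid (Fin n → Circle) where
  r v w := ∃ σ : Equiv.Perm (Fin n), v ∘ σ = w
  iseqv := by
    constructor
    · intro v; exact ⟨Equiv.refl _, rfl⟩
    · rintro v w ⟨σ, rfl⟩
      exact ⟨σ.symm, by funext i; simp⟩
    · rintro u v w ⟨σ, rfl⟩ ⟨τ, rfl⟩
      exact ⟨τ.trans σ, rfl⟩

/-- the symmetric power `Sym^n S¹`, with the quotient topology -/
def SymPow (n : ℕ) : Type := Quotient (permSetoid n)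

instance (n : ℕ) : TopologicalSpace (SymPow n) :=
  instTopologicalSpaceQuotient

/-- A list-permutation of tuples comes from a `Fin`-permutation. -/
theorem exists_perm_of_list_perm {α : Type*} :
    ∀ {n : ℕ} (v w : Fin n → α), (List.ofFn v).Perm (List.ofFn w) → ∃ σ : Equiv.Perm (Fin n), v ∘ σ = w := by
  intro n
  induction n with
  | zero => intro v w _; exact ⟨Equiv.refl _, funext fun i => i.elim0⟩
  | succ n ih =>
    intro v w hp
    have h0 : w 0 ∈ List.ofFn v := by
      rw [List.Perm.mem_iff hp, List.mem_ofFn]; exact ⟨0, rfl⟩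
    rw [List.mem_ofFn] at h0
    obtain ⟨j, hj⟩ := h0
    set τ : Equiv.Perm (Fin (n + 1)) := Equiv.swap 0 j with hτ
    have hv0 : (v ∘ τ) 0 = w 0 := by simp [hτ, Equiv.swap_apply_left, hj]
    have hperm : (List.ofFn (v ∘ τ)).Perm (List.ofFn w) :=
      (Equiv.Perm.ofFn_comp_perm τ v).trans hp
    rw [List.ofFn_succ, List.ofFn_succ] at hperm
    have htail : (List.ofFn (fun i : Fin n => (v ∘ τ) i.succ)).Perm
        (List.ofFn (fun i : Fin n => w i.succ)) := by
      have := hperm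
      rw [hv0] at this
      exact this.cons_inv
    obtain ⟨σ', hσ'⟩ := ih _ _ htail
    refine ⟨(Equiv.Perm.decomposeFin.symm (0, σ')).trans τ, funext fun i => ?_⟩
    induction i using Fin.cases with
    | zero => simpa [Equiv.Perm.decomposeFin_symm_apply_zero] using hv0
    | succ k =>
      have := congrFun hσ' k
      simp only [Function.comp_apply] at this ⊢
      simpa [Equiv.Perm.decomposeFin_symm_apply_succ] using this
open Polynomial

/-- tuple as multiset -/
def tms {α : Type*} {n : ℕ} (u : Fin n → α) : Multiset α := (Finset.univ.val.map u)

theorem tms_eq_ofFn {α : Type*} {n : ℕ} (u : Fin n → α) : tms u = ↑(List.ofFn u) := by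
  simp [tms, Fin.univ_def, List.ofFn_eq_map]

theorem prod_eq_tms {n : ℕ} (u : Fin n → ℂ) :
    (∏ i, (X - C (u i))) = ((tms u).map (fun a => X - C a)).prod := by
  rw [tms, Multiset.map_map, Finset.prod_eq_multiset_prod]
  rfl

theorem exists_perm_of_tms_eq {α : Type*} {n : ℕ} {v w : Fin n → α} (h : tms v = tms w) :
    ∃ σ : Equiv.Perm (Fin n), v ∘ σ = w := by
  apply exists_perm_of_list_perm
  rw [← Multiset.coe_eq_coe, ← tms_eq_ofFn, ← tms_eq_ofFn]; exact h

theorem prod_monic {n : ℕ} (u : Fin n → ℂ) : (∏ i, (X - C (u i))).Monic :=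
  monic_prod_of_monic _ _ (fun i _ => monic_X_sub_C _)

theorem prod_natDegree {n : ℕ} (u : Fin n → ℂ) : (∏ i, (X - C (u i))).natDegree = n := by
  simpa using natDegree_prod_of_monic Finset.univ _ (fun i _ => monic_X_sub_C (u i))

theorem prod_coeff_n {n : ℕ} (u : Fin n → ℂ) : (∏ i, (X - C (u i))).coeff n = 1 := by
  have := (prod_monic u).coeff_natDegree
  rwa [prod_natDegree] at this

theorem prod_roots {n : ℕ} (u : Fin n → ℂ) : (∏ i, (X - C (u i))).roots = tms u := by
  rw [prod_eq_tms, roots_multiset_prod_X_sub_C]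

/-- the tuple of lower coefficients of `∏ (X - uᵢ)` -/
def coeffs {n : ℕ} (u : Fin n → ℂ) : Fin n → ℂ := fun k => (∏ i, (X - C (u i))).coeff k

theorem coeffs_perm {n : ℕ} (u : Fin n → ℂ) (σ : Equiv.Perm (Fin n)) :
    coeffs (u ∘ σ) = coeffs u := by
  unfold coeffs
  funext k
  congr 1
  exact Fintype.prod_equiv σ _ _ (fun i => rfl)

theorem coeffs_inj {n : ℕ} {u w : Fin n → ℂ} (h : coeffs u = coeffs w) :
    ∃ σ : Equiv.Perm (Fin n), u ∘ σ = w := by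
  apply exists_perm_of_tms_eq
  rw [← prod_roots u, ← prod_roots w]
  congr 1
  apply Polynomial.ext
  intro k
  rcases lt_trichotomy k n with hk | hk | hk
  · exact congrFun h ⟨k, hk⟩
  · rw [hk, prod_coeff_n u, prod_coeff_n w]
  · rw [coeff_eq_zero_of_natDegree_lt (by rw [prod_natDegree]; exact hk),
      coeff_eq_zero_of_natDegree_lt (by rw [prod_natDegree]; exact hk)]

theorem coeff_zero_prod {n : ℕ} (u : Fin n → ℂ) :
    (∏ i, (X - C (u i))).coeff 0 = ∏ i, (-(u i)) := by
  rw [coeff_zero_eq_eval_zero, eval_prod]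
  simp

/-- recursion for coefficients -/
theorem coeff_mul_zero (c : ℂ) (p : ℂ[X]) :
    ((X - C c) * p).coeff 0 = -c * p.coeff 0 := by
  rw [mul_coeff_zero]
  simp

theorem coeff_mul_succ (c : ℂ) (p : ℂ[X]) (k : ℕ) :
    ((X - C c) * p).coeff (k + 1) = p.coeff k - c * p.coeff (k + 1) := by
  rw [sub_mul, coeff_sub, coeff_X_mul, coeff_C_mul]

theorem coeffs_continuous {n : ℕ} (k : ℕ) :
    Continuous (fun u : Fin n → ℂ => (∏ i, (X - C (u i))).coeff k) := by
  induction n generalizing k with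
  | zero =>
    simp only [Finset.univ_eq_empty, Finset.prod_empty]
    exact continuous_const
  | succ n ih =>
    have hsplit : ∀ u : Fin (n+1) → ℂ,
        (∏ i, (X - C (u i))) = (X - C (u 0)) * ∏ i : Fin n, (X - C (u i.succ)) := by
      intro u; rw [Fin.prod_univ_succ]
    rcases k with _ | k
    · simp only [hsplit, coeff_mul_zero]
      exact ((continuous_apply 0).neg).mul ((ih 0).comp (continuous_pi fun i => continuous_apply i.succ))
    · simp only [hsplit, coeff_mul_succ]
      exact ((ih k).comp (continuous_pi fun i => continuous_apply i.succ)).sub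
        ((continuous_apply 0).mul ((ih (k+1)).comp (continuous_pi fun i => continuous_apply i.succ)))

theorem coeffs_bound {n : ℕ} (k : ℕ) (u : Fin n → ℂ) (hu : ∀ i, ‖u i‖ ≤ 1) :
    ‖(∏ i, (X - C (u i))).coeff k‖ ≤ 2 ^ n := by
  induction n generalizing k with
  | zero =>
    simp only [Finset.univ_eq_empty, Finset.prod_empty]
    rcases k with _ | k <;> simp [Polynomial.coeff_one]
  | succ n ih =>
    have hsplit : (∏ i, (X - C (u i))) = (X - C (u 0)) * ∏ i : Fin n, (X - C (u i.succ)) :=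
      Fin.prod_univ_succ _
    have hu' : ∀ i : Fin n, ‖u i.succ‖ ≤ 1 := fun i => hu i.succ
    set p : ℂ[X] := ∏ i : Fin n, (X - C (u i.succ)) with hp
    have hbk : ∀ m : ℕ, ‖p.coeff m‖ ≤ 2 ^ n := fun m => ih m _ hu'
    rcases k with _ | k
    · rw [hsplit, coeff_mul_zero, norm_mul, norm_neg]
      calc ‖u 0‖ * ‖p.coeff 0‖
          ≤ 1 * 2 ^ n := mul_le_mul (hu 0) (hbk 0) (norm_nonneg _) zero_le_one
        _ ≤ 2 ^ (n + 1) := by rw [one_mul]; exact pow_le_pow_right₀ one_le_two (Nat.le_succ n)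
    · rw [hsplit, coeff_mul_succ]
      calc ‖p.coeff k - u 0 * p.coeff (k+1)‖
          ≤ ‖p.coeff k‖ + ‖u 0 * p.coeff (k+1)‖ := norm_sub_le _ _
        _ ≤ 2 ^ n + 1 * 2 ^ n := by
            refine add_le_add (hbk k) ?_
            rw [norm_mul]
            exact mul_le_mul (hu 0) (hbk (k+1)) (norm_nonneg _) zero_le_one
        _ = 2 ^ (n + 1) := by ring
/-- the monic polynomial with lower coefficients `c` -/
def mp {n : ℕ} (c : Fin n → ℂ) : ℂ[X] := X ^ n + ∑ k : Fin n, C (c k) * X ^ (k : ℕ)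

theorem mp_degree_lt {n : ℕ} (c : Fin n → ℂ) :
    (∑ k : Fin n, C (c k) * X ^ (k : ℕ)).degree < (n : WithBot ℕ) := by
  apply lt_of_le_of_lt (degree_sum_le _ _)
  rw [Finset.sup_lt_iff (by exact_mod_cast WithBot.bot_lt_coe n)]
  intro k _
  apply lt_of_le_of_lt (degree_C_mul_X_pow_le _ _)
  exact_mod_cast k.isLt

theorem mp_monic {n : ℕ} (c : Fin n → ℂ) : (mp c).Monic := by
  apply (monic_X_pow n).add_of_left
  rw [degree_X_pow]
  exact mp_degree_lt c

theorem mp_natDegree {n : ℕ} (c : Fin n → ℂ) : (mp c).natDegree = n := by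
  apply natDegree_eq_of_degree_eq_some
  rw [mp, degree_add_eq_left_of_degree_lt (by rw [degree_X_pow]; exact mp_degree_lt c),
    degree_X_pow]

theorem mp_coeff {n : ℕ} (c : Fin n → ℂ) (k : Fin n) : (mp c).coeff k = c k := by
  rw [mp, coeff_add, coeff_X_pow, if_neg (Nat.ne_of_lt k.isLt), zero_add, finset_sum_coeff]
  have : ∀ k' : Fin n, (C (c k') * X ^ (k' : ℕ)).coeff k = if k' = k then c k' else 0 := by
    intro k'
    rw [coeff_C_mul, coeff_X_pow]
    by_cases h : k' = k
    · simp [h]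
    · rw [if_neg h, if_neg (fun hh => h (Fin.val_injective hh.symm)), mul_zero]
  rw [Finset.sum_congr rfl (fun k' _ => this k')]
  simp

/-- the outer radius -/
def RR (n : ℕ) : ℝ := n * 2 ^ n + 1
/-- the inner radius -/
def rr (n : ℕ) : ℝ := (RR n ^ (n - 1))⁻¹

theorem RR_pos (n : ℕ) : 0 < RR n := by
  have : (0:ℝ) ≤ n * 2 ^ n := by positivity
  simp only [RR]; linarith

theorem one_le_RR (n : ℕ) : 1 ≤ RR n := by
  have : (0:ℝ) ≤ n * 2 ^ n := by positivity
  simp only [RR]; linarith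

theorem rr_pos (n : ℕ) : 0 < rr n := by
  rw [rr]; exact inv_pos.mpr (pow_pos (RR_pos n) _)

theorem rr_le_one (n : ℕ) : rr n ≤ 1 := by
  rw [rr]
  rw [inv_le_one_iff₀]
  right
  exact one_le_pow₀ (one_le_RR n)

/-- Cauchy-type bound for roots of a monic polynomial with bounded coefficients -/
theorem root_norm_le {n : ℕ} (c : Fin n → ℂ) (hc : ∀ k, ‖c k‖ ≤ 2 ^ n) {z : ℂ}
    (hz : (mp c).IsRoot z) : ‖z‖ ≤ RR n := by
  rcases le_or_gt ‖z‖ 1 with h1 | h1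
  · exact h1.trans (one_le_RR n)
  have hzn : z ^ n = -∑ k : Fin n, c k * z ^ (k : ℕ) := by
    have := hz
    rw [IsRoot, mp, eval_add, eval_pow, eval_X, eval_finset_sum] at this
    simp only [eval_mul, eval_pow, eval_X, eval_C] at this
    linear_combination this
  have hbound : ‖z‖ ^ n ≤ n * 2 ^ n * ‖z‖ ^ (n - 1) := by
    rw [← norm_pow, hzn, norm_neg]
    calc ‖∑ k : Fin n, c k * z ^ (k : ℕ)‖
        ≤ ∑ k : Fin n, ‖c k * z ^ (k : ℕ)‖ := norm_sum_le _ _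
      _ ≤ ∑ _k : Fin n, 2 ^ n * ‖z‖ ^ (n - 1) := by
          apply Finset.sum_le_sum
          intro k _
          rw [norm_mul, norm_pow]
          apply mul_le_mul (hc k) _ (by positivity) (by positivity)
          exact pow_le_pow_right₀ h1.le (Nat.le_pred_of_lt k.isLt)
      _ = n * 2 ^ n * ‖z‖ ^ (n - 1) := by
          rw [Finset.sum_const, Finset.card_univ, Fintype.card_fin, nsmul_eq_mul]; ring
  rcases Nat.eq_zero_or_pos n with hn0 | hn0
  · subst hn0; simp at h1 hbound; linarith [one_le_RR 0]
  have hn1 : n - 1 + 1 = n := Nat.succ_pred_eq_of_pos hn0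
  have hzpow : ‖z‖ ^ n = ‖z‖ ^ (n - 1) * ‖z‖ := by conv_lhs => rw [← hn1, pow_succ]
  have hpos : (0:ℝ) < ‖z‖ ^ (n - 1) := by positivity
  rw [hzpow] at hbound
  have hb2 : ‖z‖ ^ (n - 1) * ‖z‖ ≤ ‖z‖ ^ (n - 1) * (n * 2 ^ n) := by
    rw [mul_comm (‖z‖ ^ (n - 1)) ((n : ℝ) * 2 ^ n)]; linarith
  have := le_of_mul_le_mul_left hb2 hpos
  rw [RR]; linarith

/-- every admissible coefficient tuple is realized by a root tuple lying in the annulus -/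
theorem exists_root_tuple {n : ℕ} (hn : 0 < n) (c : Fin n → ℂ)
    (hc : ∀ k, ‖c k‖ ≤ 2 ^ n) (h0 : ‖c ⟨0, hn⟩‖ = 1) :
    ∃ u : Fin n → ℂ, coeffs u = c ∧ ∀ i, rr n ≤ ‖u i‖ ∧ ‖u i‖ ≤ RR n := by
  set p := mp c with hp
  have hsplits := IsAlgClosed.splits p
  have hcard : Multiset.card p.roots = n := by
    rw [splits_iff_card_roots.mp hsplits, mp_natDegree]
  have hlen : p.roots.toList.length = n := by rw [Multiset.length_toList, hcard]
  set u : Fin n → ℂ := fun i => p.roots.toList.getD i 0 with hu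
  have hofn : List.ofFn u = p.roots.toList := by
    apply List.ext_getElem (by rw [List.length_ofFn, hlen])
    intro i hi1 hi2
    rw [List.getElem_ofFn]
    simp only [hu]
    rw [List.getD_eq_getElem _ _ (by simpa [hlen] using hi1)]
  have htms : tms u = p.roots := by
    rw [tms_eq_ofFn, hofn, Multiset.coe_toList]
  have hprod : (∏ i, (X - C (u i))) = p := by
    rw [prod_eq_tms, htms]
    exact (hsplits.eq_prod_roots_of_monic (mp_monic c)).symm
  have hcoeffs : coeffs u = c := by
    funext k
    rw [coeffs, hprod, hp, mp_coeff]
  -- norms multiply to 1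
  have hprodnorm : ∏ i, ‖u i‖ = 1 := by
    have h00 : p.coeff 0 = c ⟨0, hn⟩ := by
      have := mp_coeff c ⟨0, hn⟩
      simpa using this
    have : (∏ i, (X - C (u i))).coeff 0 = ∏ i, (-(u i)) := coeff_zero_prod u
    rw [hprod, h00] at this
    have hnorm : ‖∏ i, (-(u i))‖ = 1 := by rw [← this, h0]
    rw [← hnorm]
    rw [norm_prod]
    congr 1
    funext i
    rw [norm_neg]
  have hub : ∀ i, ‖u i‖ ≤ RR n := by
    intro i
    have hmem : u i ∈ p.roots := by
      rw [← htms, tms]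
      exact Multiset.mem_map_of_mem _ (Finset.mem_univ i)
    have hroot : p.IsRoot (u i) := isRoot_of_mem_roots hmem
    exact root_norm_le c hc hroot
  refine ⟨u, hcoeffs, fun i => ⟨?_, hub i⟩⟩
  -- lower bound
  set Q := ∏ j ∈ Finset.univ.erase i, ‖u j‖ with hQ
  have hmul : ‖u i‖ * Q = 1 := by
    rw [hQ, Finset.mul_prod_erase Finset.univ (fun j => ‖u j‖) (Finset.mem_univ i), hprodnorm]
  have hQnonneg : 0 ≤ Q := Finset.prod_nonneg (fun j _ => norm_nonneg _)
  have hQne : Q ≠ 0 := fun h => by rw [h, mul_zero] at hmul; exact one_ne_zero hmul.symm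
  have hQpos : 0 < Q := hQnonneg.lt_of_ne (Ne.symm hQne)
  have hQle : Q ≤ RR n ^ (n - 1) := by
    calc Q ≤ ∏ _j ∈ Finset.univ.erase i, RR n :=
          Finset.prod_le_prod (fun j _ => norm_nonneg _) (fun j _ => hub j)
      _ = RR n ^ (n - 1) := by
          rw [Finset.prod_const, Finset.card_erase_of_mem (Finset.mem_univ i),
            Finset.card_univ, Fintype.card_fin]
  have : ‖u i‖ = Q⁻¹ := eq_inv_of_mul_eq_one_left hmul
  rw [this, rr]
  exact inv_anti₀ hQpos hQle
/-! ## The symmetric power of `ℂ` and the Vieta homeomorphism -/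

/-- permutation setoid on complex tuples -/
def cSetoid (n : ℕ) : Setoid (Fin n → ℂ) where
  r v w := ∃ σ : Equiv.Perm (Fin n), v ∘ σ = w
  iseqv := by
    constructor
    · intro v; exact ⟨Equiv.refl _, rfl⟩
    · rintro v w ⟨σ, rfl⟩
      exact ⟨σ.symm, by funext i; simp⟩
    · rintro u v w ⟨σ, rfl⟩ ⟨τ, rfl⟩
      exact ⟨τ.trans σ, rfl⟩

def SymC (n : ℕ) : Type := Quotient (cSetoid n)

instance (n : ℕ) : TopologicalSpace (SymC n) := instTopologicalSpaceQuotient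

/-- Vieta map on the symmetric power of `ℂ` -/
def Vc (n : ℕ) : SymC n → (Fin n → ℂ) :=
  Quotient.lift coeffs (by rintro v w ⟨σ, rfl⟩; exact (coeffs_perm v σ).symm ▸ rfl)

theorem Vc_mk (n : ℕ) (u : Fin n → ℂ) : Vc n (Quotient.mk (cSetoid n) u) = coeffs u := rfl

theorem Vc_continuous (n : ℕ) : Continuous (Vc n) := by
  apply Continuous.quotient_lift
  unfold coeffs
  exact continuous_pi fun k => coeffs_continuous (k : ℕ)

theorem Vc_injective (n : ℕ) : Function.Injective (Vc n) := by
  intro x y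
  induction x using Quotient.ind
  induction y using Quotient.ind
  rename_i u w
  intro h
  rw [Vc_mk, Vc_mk] at h
  exact Quotient.sound (coeffs_inj h)

/-- the annulus -/
def Ann (n : ℕ) : Set ℂ := {z | rr n ≤ ‖z‖ ∧ ‖z‖ ≤ RR n}

theorem Ann_compact (n : ℕ) : IsCompact (Ann n) := by
  have hclosed : IsClosed (Ann n) :=
    (isClosed_le continuous_const continuous_norm).inter (isClosed_le continuous_norm continuous_const)
  have hbdd : Bornology.IsBounded (Ann n) := by
    apply (Metric.isBounded_closedBall (x := (0:ℂ)) (r := RR n)).subset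
    intro z hz
    simpa [Metric.mem_closedBall, Complex.dist_eq] using hz.2
  exact Metric.isCompact_of_isClosed_isBounded hclosed hbdd

theorem circle_mem_Ann (n : ℕ) (v : Circle) : (v : ℂ) ∈ Ann n := by
  constructor
  · rw [show ‖(v : ℂ)‖ = 1 by simp [Circle.norm_coe]]
    exact rr_le_one n
  · rw [show ‖(v : ℂ)‖ = 1 by simp [Circle.norm_coe]]
    exact one_le_RR n

/-- the compact part of `SymC n` consisting of points with all coordinates in the annulus -/
def KK (n : ℕ) : Set (SymC n) := (Quotient.mk (cSetoid n)) '' {u | ∀ i, u i ∈ Ann n}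

instance (n : ℕ) : CompactSpace (KK n) := by
  rw [← isCompact_iff_compactSpace]
  apply IsCompact.image _ continuous_quotient_mk'
  have : {u : Fin n → ℂ | ∀ i, u i ∈ Ann n} = Set.univ.pi (fun _ => Ann n) := by
    ext u; simp [Set.mem_pi]
  rw [this]
  exact isCompact_univ_pi fun _ => Ann_compact n

/-- Vieta map restricted to `KK n` -/
def VK (n : ℕ) : KK n → (Fin n → ℂ) := fun x => Vc n x.val

theorem VK_continuous (n : ℕ) : Continuous (VK n) :=
  (Vc_continuous n).comp continuous_subtype_val

theorem VK_injective (n : ℕ) : Function.Injective (VK n) := fun x y h =>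
  Subtype.ext (Vc_injective n h)

/-- the Vieta homeomorphism onto its image -/
def homeoVK (n : ℕ) : KK n ≃ₜ Set.range (VK n) :=
  Continuous.homeoOfEquivCompactToT2 (f := Equiv.ofInjective (VK n) (VK_injective n))
    (by
      apply Continuous.subtype_mk
      exact VK_continuous n)

theorem homeoVK_symm_apply (n : ℕ) (x : KK n) (h : VK n x ∈ Set.range (VK n)) :
    (homeoVK n).symm ⟨VK n x, h⟩ = x := by
  have : (⟨VK n x, h⟩ : Set.range (VK n)) = homeoVK n x := Subtype.ext rfl
  rw [this]
  exact (homeoVK n).symm_apply_apply x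

instance (n : ℕ) : T2Space (KK n) := (homeoVK n).isEmbedding.t2Space

/-! ## Normalization to the circle -/

/-- normalization of a nonzero complex number to the circle -/
def toCir {z : ℂ} (hz : z ≠ 0) : Circle :=
  ⟨z / ‖z‖, by
    have h1 : ‖z / (‖z‖ : ℂ)‖ = 1 := by
      rw [norm_div, Complex.norm_real, norm_norm, div_self (norm_ne_zero_iff.mpr hz)]
    simpa [Submonoid.unitSphere, mem_sphere_zero_iff_norm] using h1⟩

/-- total normalization map -/
def unitd (z : ℂ) : Circle := if hz : z = 0 then 1 else toCir hz

theorem unitd_eq {z : ℂ} (hz : z ≠ 0) : unitd z = toCir hz := dif_neg hz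

theorem toCir_coe {z : ℂ} (hz : z ≠ 0) : (toCir hz : ℂ) = z / ‖z‖ := rfl

theorem unitd_circle (v : Circle) : unitd (v : ℂ) = v := by
  rw [unitd_eq (v.coe_ne_zero)]
  ext
  rw [toCir_coe]
  simp [Circle.norm_coe]

/-- the tuple-level map from annulus tuples into `KK n` -/
def qB (n : ℕ) (u : Fin n → Ann n) : KK n :=
  ⟨Quotient.mk (cSetoid n) (fun i => (u i : ℂ)), ⟨_, fun i => (u i).2, rfl⟩⟩

theorem qB_continuous (n : ℕ) : Continuous (qB n) := by
  apply Continuous.subtype_mk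
  exact continuous_quotient_mk'.comp (continuous_pi fun i => (continuous_apply i).subtype_val)

theorem qB_surjective (n : ℕ) : Function.Surjective (qB n) := by
  rintro ⟨x, u, hu, rfl⟩
  exact ⟨fun i => ⟨u i, hu i⟩, rfl⟩

instance (n : ℕ) : CompactSpace (Fin n → Ann n) := by
  haveI : CompactSpace (Ann n) := isCompact_iff_compactSpace.mp (Ann_compact n)
  infer_instance

theorem qB_isQuotientMap (n : ℕ) : IsQuotientMap (qB n) :=
  IsClosedMap.isQuotientMap ((qB_continuous n).isClosedMap) (qB_continuous n) (qB_surjective n)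

/-- the normalization map `KK n → SymPow n` -/
def Phi (n : ℕ) : KK n → SymPow n := fun x =>
  Quotient.lift (fun u : Fin n → ℂ => Quotient.mk (permSetoid n) (fun i => unitd (u i)))
    (by
      rintro u w ⟨σ, rfl⟩
      exact Quotient.sound ⟨σ, rfl⟩) x.val

theorem Phi_mk (n : ℕ) (u : Fin n → ℂ) (h) :
    Phi n ⟨Quotient.mk (cSetoid n) u, h⟩ = Quotient.mk (permSetoid n) (fun i => unitd (u i)) := rfl

theorem Phi_continuous (n : ℕ) : Continuous (Phi n) := by
  rw [(qB_isQuotientMap n).continuous_iff]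
  have heq : (Phi n) ∘ (qB n) = fun u : Fin n → Ann n =>
      Quotient.mk (permSetoid n) (fun i => toCir (z := (u i : ℂ))
        (fun h0 => by
          have := (u i).2.1
          rw [h0] at this
          simp only [norm_zero] at this
          exact absurd this (not_le.mpr (rr_pos n)))) := by
    funext u
    simp only [Function.comp_apply, qB, Phi_mk]
    show Quotient.mk (permSetoid n) (fun i => unitd ((u i : ℂ))) = _
    congr 1
    funext i
    exact unitd_eq _
  rw [heq]
  apply Continuous.comp continuous_quotient_mk'
  apply continuous_pi
  intro i
  apply Continuous.subtype_mk
  have h1 : Continuous fun u : Fin n → Ann n => (u i : ℂ) := (continuous_apply i).subtype_val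
  apply h1.div (by continuity)
  intro u
  simp only [Ne, Complex.ofReal_eq_zero, norm_ne_zero_iff]
  intro h0
  have := (u i).2.1
  rw [h0] at this
  simp only [norm_zero] at this
  exact absurd this (not_le.mpr (rr_pos n))
/-! ## The circle-level maps -/

/-- the product map -/
def Pfun (n : ℕ) : SymPow n → Circle :=
  Quotient.lift (fun v => ∏ i, v i)
    (by rintro v w ⟨σ, rfl⟩; exact (Equiv.prod_comp σ v).symm)

theorem Pfun_continuous (n : ℕ) : Continuous (Pfun n) :=
  Continuous.quotient_lift (continuous_finset_prod _ fun i _ => continuous_apply i) _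

def PCM (n : ℕ) : C(SymPow n, Circle) := ⟨Pfun n, Pfun_continuous n⟩

section withNeZero
variable (n : ℕ) [NeZero n]

/-- the section tuple -/
def secT (w : Circle) : Fin n → Circle := fun i => if i = 0 then w else 1

theorem prod_secT (w : Circle) : ∏ i, secT n w i = w := by
  unfold secT
  rw [Finset.prod_ite_eq' Finset.univ (0 : Fin n) (fun _ => w)]
  simp

def sFun : Circle → SymPow n := fun w => Quotient.mk (permSetoid n) (secT n w)

theorem sFun_continuous : Continuous (sFun n) := by
  apply continuous_quotient_mk'.comp
  apply continuous_pi
  intro i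
  by_cases h : i = (0 : Fin n)
  · simpa [secT, h] using continuous_id'
  · simpa [secT, h] using continuous_const

def sCM : C(Circle, SymPow n) := ⟨sFun n, sFun_continuous n⟩

theorem Pfun_sFun (w : Circle) : Pfun n (sFun n w) = w := prod_secT n w

/-! ## The coefficient path -/

def cfA (v : Fin n → Circle) : Fin n → ℂ := coeffs (fun i => (v i : ℂ))

def cfB (v : Fin n → Circle) : Fin n → ℂ := coeffs (fun i => (secT n (∏ j, v j) i : ℂ))

/-- linear interpolation of coefficient tuples -/
def cf (v : Fin n → Circle) (t : ℝ) : Fin n → ℂ :=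
  fun k => ((1 - t : ℝ) : ℂ) * cfA n v k + ((t : ℝ) : ℂ) * cfB n v k

theorem cfA_bound (v : Fin n → Circle) (k : Fin n) : ‖cfA n v k‖ ≤ 2 ^ n := by
  apply coeffs_bound
  intro i
  simp [Circle.norm_coe]

theorem cfB_bound (v : Fin n → Circle) (k : Fin n) : ‖cfB n v k‖ ≤ 2 ^ n := by
  apply coeffs_bound
  intro i
  rcases ite_eq_or_eq (i = (0:Fin n)) ((∏ j, v j : Circle)) (1 : Circle) with h | h <;>
    · show ‖((secT n (∏ j, v j) i : Circle) : ℂ)‖ ≤ 1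
      simp [Circle.norm_coe]

theorem cf_bound (v : Fin n → Circle) (t : ℝ) (ht : t ∈ unitInterval) (k : Fin n) :
    ‖cf n v t k‖ ≤ 2 ^ n := by
  obtain ⟨ht0, ht1⟩ := ht
  calc ‖cf n v t k‖
      ≤ ‖((1 - t : ℝ) : ℂ) * cfA n v k‖ + ‖((t : ℝ) : ℂ) * cfB n v k‖ := norm_add_le _ _
    _ = (1 - t) * ‖cfA n v k‖ + t * ‖cfB n v k‖ := by
        rw [norm_mul, norm_mul, Complex.norm_real, Complex.norm_real,
          Real.norm_of_nonneg (by linarith), Real.norm_of_nonneg ht0]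
    _ ≤ (1 - t) * 2 ^ n + t * 2 ^ n := by
        apply add_le_add
        · exact mul_le_mul_of_nonneg_left (cfA_bound n v k) (by linarith)
        · exact mul_le_mul_of_nonneg_left (cfB_bound n v k) ht0
    _ = 2 ^ n := by ring

theorem npos : 0 < n := Nat.pos_of_ne_zero (NeZero.ne n)

theorem cfA_zero (v : Fin n → Circle) :
    cfA n v ⟨0, npos n⟩ = (-1) ^ n * ∏ i, (v i : ℂ) := by
  show (∏ i, (X - C ((v i : ℂ)))).coeff 0 = _
  rw [coeff_zero_prod]
  rw [show (fun i => -((v i : ℂ))) = fun i => (-1) * ((v i : ℂ)) by funext i; ring]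
  rw [Finset.prod_mul_distrib, Finset.prod_const, Finset.card_univ, Fintype.card_fin]

theorem cfB_zero (v : Fin n → Circle) :
    cfB n v ⟨0, npos n⟩ = (-1) ^ n * ∏ i, (v i : ℂ) := by
  show (∏ i, (X - C ((secT n (∏ j, v j) i : ℂ)))).coeff 0 = _
  rw [coeff_zero_prod]
  rw [show (fun i => -((secT n (∏ j, v j) i : ℂ))) = fun i => (-1) * ((secT n (∏ j, v j) i : ℂ))
    by funext i; ring]
  rw [Finset.prod_mul_distrib, Finset.prod_const, Finset.card_univ, Fintype.card_fin]
  congr 1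
  have : ∏ i, ((secT n (∏ j, v j) i : Circle) : ℂ) = ((∏ i, secT n (∏ j, v j) i : Circle) : ℂ) :=
    (map_prod Circle.coeHom _ _).symm
  rw [this, prod_secT]
  exact (map_prod Circle.coeHom _ _)

theorem cf_zero_coeff (v : Fin n → Circle) (t : ℝ) :
    cf n v t ⟨0, npos n⟩ = (-1) ^ n * ∏ i, (v i : ℂ) := by
  rw [cf, cfA_zero, cfB_zero]
  push_cast
  ring

theorem cf_zero_norm (v : Fin n → Circle) (t : ℝ) : ‖cf n v t ⟨0, npos n⟩‖ = 1 := by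
  rw [cf_zero_coeff, norm_mul, norm_pow, norm_neg, norm_one, one_pow, one_mul, norm_prod]
  rw [Finset.prod_congr rfl (fun i _ => show ‖(v i : ℂ)‖ = 1 by simp [Circle.norm_coe])]
  simp

theorem cf_mem_range (v : Fin n → Circle) (t : ℝ) (ht : t ∈ unitInterval) :
    cf n v t ∈ Set.range (VK n) := by
  obtain ⟨u, hcu, hb⟩ := exists_root_tuple (npos n) (cf n v t) (cf_bound n v t ht) (cf_zero_norm n v t)
  exact ⟨⟨Quotient.mk (cSetoid n) u, ⟨u, fun i => ⟨(hb i).1, (hb i).2⟩, rfl⟩⟩, hcu⟩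

/-! ## The homotopy -/

def Hcirc : (Fin n → Circle) × unitInterval → SymPow n := fun p =>
  Phi n ((homeoVK n).symm ⟨cf n p.1 p.2.val, cf_mem_range n p.1 p.2.val p.2.2⟩)

theorem cfB_eq (v : Fin n → Circle) :
    cfB n v = coeffs (fun i => if i = (0 : Fin n) then (∏ j, (v j : ℂ)) else 1) := by
  unfold cfB
  have heq : (fun i => ((secT n (∏ j, v j) i : Circle) : ℂ))
      = (fun i => if i = (0 : Fin n) then (∏ j, ((v j : ℂ))) else 1) := by
    funext i
    by_cases h : i = (0 : Fin n)
    · simp only [secT, h, if_true]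
      exact map_prod Circle.coeHom _ _
    · simp [secT, h]
  rw [heq]

theorem cf_continuous :
    Continuous (fun p : (Fin n → Circle) × unitInterval => cf n p.1 p.2.val) := by
  have hcoe : Continuous (fun p : (Fin n → Circle) × unitInterval => fun i => (p.1 i : ℂ)) :=
    continuous_pi fun i => continuous_subtype_val.comp ((continuous_apply i).comp continuous_fst)
  have ht : Continuous (fun p : (Fin n → Circle) × unitInterval => (p.2.val : ℝ)) :=
    continuous_subtype_val.comp continuous_snd
  have hA : ∀ k : Fin n, Continuous (fun p : (Fin n → Circle) × unitInterval => cfA n p.1 k) :=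
    fun k => (coeffs_continuous (k : ℕ)).comp hcoe
  have hB : ∀ k : Fin n, Continuous (fun p : (Fin n → Circle) × unitInterval => cfB n p.1 k) := by
    intro k
    have heq : (fun p : (Fin n → Circle) × unitInterval => cfB n p.1 k)
        = fun p => coeffs (fun i => if i = (0 : Fin n) then (∏ j, ((p.1 j : ℂ))) else 1) k := by
      funext p; rw [cfB_eq]
    rw [heq]
    apply ((coeffs_continuous (k : ℕ)).comp)
    apply continuous_pi
    intro i
    by_cases h : i = (0 : Fin n)
    · simp only [h, if_true]
      exact continuous_finset_prod _ fun j _ =>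
        continuous_subtype_val.comp ((continuous_apply j).comp continuous_fst)
    · simp only [h, if_false]
      exact continuous_const
  apply continuous_pi
  intro k
  unfold cf
  exact ((Complex.continuous_ofReal.comp (continuous_const.sub ht)).mul (hA k)).add
    ((Complex.continuous_ofReal.comp ht).mul (hB k))

theorem PhiSymm (w : Fin n → Circle) (h : coeffs (fun i => (w i : ℂ)) ∈ Set.range (VK n)) :
    Phi n ((homeoVK n).symm ⟨coeffs (fun i => (w i : ℂ)), h⟩) = Quotient.mk (permSetoid n) w := by
  set x₀ : KK n := ⟨Quotient.mk (cSetoid n) (fun i => (w i : ℂ)),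
    ⟨_, fun i => circle_mem_Ann n (w i), rfl⟩⟩ with hx₀
  have hval : (⟨coeffs (fun i => (w i : ℂ)), h⟩ : Set.range (VK n)) = ⟨VK n x₀, Set.mem_range_self x₀⟩ :=
    Subtype.ext rfl
  rw [hval, homeoVK_symm_apply]
  have : Phi n x₀ = Quotient.mk (permSetoid n) (fun i => unitd ((w i : ℂ))) := rfl
  rw [this]
  congr 1
  funext i
  exact unitd_circle (w i)

theorem Hcirc_endpoint (v : Fin n → Circle) (t : unitInterval) (w : Fin n → Circle)
    (hcf : cf n v t.val = coeffs (fun i => (w i : ℂ))) :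
    Hcirc n (v, t) = Quotient.mk (permSetoid n) w := by
  unfold Hcirc
  have hmem' : coeffs (fun i => (w i : ℂ)) ∈ Set.range (VK n) := hcf ▸ cf_mem_range n v t.val t.2
  have harg : (⟨cf n v t.val, cf_mem_range n v t.val t.2⟩ : Set.range (VK n))
      = ⟨coeffs (fun i => (w i : ℂ)), hmem'⟩ := Subtype.ext hcf
  rw [harg, PhiSymm]

theorem Hcirc_zero (v : Fin n → Circle) :
    Hcirc n (v, 0) = Quotient.mk (permSetoid n) v := by
  apply Hcirc_endpoint
  funext k
  show ((1 - ((0:unitInterval):ℝ) : ℝ) : ℂ) * cfA n v k + (((0:unitInterval):ℝ) : ℂ) * cfB n v k = _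
  norm_num
  rfl

theorem Hcirc_one (v : Fin n → Circle) :
    Hcirc n (v, 1) = Quotient.mk (permSetoid n) (secT n (∏ j, v j)) := by
  apply Hcirc_endpoint
  funext k
  show ((1 - ((1:unitInterval):ℝ) : ℝ) : ℂ) * cfA n v k + (((1:unitInterval):ℝ) : ℂ) * cfB n v k = _
  norm_num
  rfl

theorem cf_perm (v : Fin n → Circle) (σ : Equiv.Perm (Fin n)) (t : ℝ) :
    cf n (v ∘ σ) t = cf n v t := by
  have hA : cfA n (v ∘ σ) = cfA n v := coeffs_perm (fun i => (v i : ℂ)) σ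
  have hB : cfB n (v ∘ σ) = cfB n v := by
    unfold cfB
    rw [show (∏ j, (v ∘ σ) j) = ∏ j, v j from Equiv.prod_comp σ v]
  unfold cf; rw [hA, hB]

theorem Hcirc_perm (v : Fin n → Circle) (σ : Equiv.Perm (Fin n)) (t : unitInterval) :
    Hcirc n (v ∘ σ, t) = Hcirc n (v, t) := by
  unfold Hcirc
  have harg : (⟨cf n (v ∘ σ) t.val, cf_mem_range n (v ∘ σ) t.val t.2⟩ : Set.range (VK n))
      = ⟨cf n v t.val, cf_mem_range n v t.val t.2⟩ := Subtype.ext (cf_perm n v σ t.val)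
  rw [harg]

theorem Hcirc_continuous : Continuous (Hcirc n) := by
  apply (Phi_continuous n).comp
  apply ((homeoVK n).symm.continuous).comp
  exact (cf_continuous n).subtype_mk _

/-! ## Assembly -/

def bigH : C((Fin n → Circle) × unitInterval, SymPow n) := ⟨Hcirc n, Hcirc_continuous n⟩

def HqCM : C(SymPow n, C(unitInterval, SymPow n)) :=
  ⟨Quotient.lift (fun v => (bigH n).curry v)
      (by
        rintro v w ⟨σ, rfl⟩
        ext t
        exact (Hcirc_perm n v σ t).symm),
    Continuous.quotient_lift ((bigH n).curry.continuous) _⟩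

def HHCM : C(SymPow n × unitInterval, SymPow n) := ContinuousMap.uncurry (HqCM n)

theorem HHCM_mk (v : Fin n → Circle) (t : unitInterval) :
    HHCM n (Quotient.mk (permSetoid n) v, t) = Hcirc n (v, t) := rfl

def homot : (ContinuousMap.id (SymPow n)).Homotopy ((sCM n).comp (PCM n)) where
  toFun := fun p => HHCM n (p.2, p.1)
  continuous_toFun := (HHCM n).continuous.comp (continuous_snd.prodMk continuous_fst)
  map_zero_left := by
    intro x
    induction x using Quotient.ind
    rename_i v
    show HHCM n (Quotient.mk (permSetoid n) v, 0) = _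
    rw [HHCM_mk, Hcirc_zero]
    rfl
  map_one_left := by
    intro x
    induction x using Quotient.ind
    rename_i v
    show HHCM n (Quotient.mk (permSetoid n) v, 1) = _
    rw [HHCM_mk, Hcirc_one]
    rfl

theorem Ps_eq_id : (PCM n).comp (sCM n) = ContinuousMap.id Circle := by
  ext w
  show (Pfun n (sFun n w) : ℂ) = ((ContinuousMap.id Circle) w : ℂ)
  rw [Pfun_sFun]
  rfl

end withNeZero

theorem symmetric_power_circle_homotopy_equiv (n : ℕ) (hn : 1 ≤ n) :
    ∃ e : ContinuousMap.HomotopyEquiv (SymPow n) Circle,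
      (∀ v : Fin n → Circle,
        e.toFun (Quotient.mk (permSetoid n) v) = ∏ i, v i) ∧
      (∀ (z : Circle) (v : Fin n → Circle),
        e.toFun (Quotient.mk (permSetoid n) (fun i => z * v i)) =
          z ^ n * e.toFun (Quotient.mk (permSetoid n) v)) := by
  haveI : NeZero n := ⟨Nat.one_le_iff_ne_zero.mp hn⟩
  refine ⟨{ toFun := PCM n
            invFun := sCM n
            left_inv := ⟨(homot n).symm⟩
            right_inv := by rw [Ps_eq_id] }, ?_, ?_⟩
  · intro v
    rfl
  · intro z v
    show (∏ i, (z * v i)) = z ^ n * ∏ i, v i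
    rw [Finset.prod_mul_distrib, Finset.prod_const, Finset.card_univ, Fintype.card_fin]


end Stmt14
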